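/- Let P be a Markov transition kernel on (X,B) with invariant probability measure π satisfying ⦀P^n − π⦀_{V^α} ≤ C0 ρ^n for all n (ρ ∈ (0,1), C0 < ∞), let θ ∈ [0,1), and let μ be a probability measure with μ(V^α) ≤ M < ∞. Set Q = θP + (1−θ)μ and π_Q = (1−θ) Σ_{i=0}^∞ θ^i μP^i. Then for all k ≥ 0, ⦀Q^k − π_Q⦀_{V^α} ≤ C θ^k ρ^k, where C = C0 (1 + (1−θ)M/(1−θρ)) depends only on C0, θ, ρ, M and not on μ otherwise. In particular, with μ = μ_n from the importance-resampling scheme (so that sup_n μ_n(V^α) < ∞), the kernels P_n = θP + (1−θ)μ_n satisfy ⦀P_n^k − π_n⦀_{V^α} ≤ C θ^k ρ^k with C independent of n and k. -/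

import Mathlib

open MeasureTheory Filter
open scoped ENNReal

namespace MixtureKernelErgodicity

variable {X : Type*} [MeasurableSpace X] {Ω : Type*} [MeasurableSpace Ω]

/-- `iter P n` is the `n`-step transition kernel `P^n`. -/
noncomputable def iter (P : X → Measure X) : ℕ → X → Measure X
  | 0 => fun x => Measure.dirac x
  | n + 1 => fun x => (iter P n x).bind P

/-- The mixture kernel `Q(x,·) = θ P(x,·) + (1−θ) μ(·)`. -/
noncomputable def mixK (P : X → Measure X) (μ : Measure X) (θ : ℝ) : X → Measure X :=
  fun x => ENNReal.ofReal θ • P x + ENNReal.ofReal (1 - θ) • μ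

/-- The measure `π_Q = (1−θ) Σ_{i=0}^∞ θ^i μP^i`. -/
noncomputable def piQ (P : X → Measure X) (μ : Measure X) (θ : ℝ) : Measure X :=
  ENNReal.ofReal (1 - θ) •
    Measure.sum (fun i : ℕ => ENNReal.ofReal θ ^ i • μ.bind (iter P i))

/-- The (random) weighted empirical measure
`Σ_{k<n} ω(Y_k) δ_{Y_k} / Σ_{j<n} ω(Y_j)` of the auxiliary chain. -/
noncomputable def empMeas (w : X → ℝ) (Y : ℕ → Ω → X) (n : ℕ) (ω : Ω) : Measure X :=
  ∑ k ∈ Finset.range n,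
    ENNReal.ofReal (w (Y k ω) / ∑ j ∈ Finset.range n, w (Y j ω)) •
      Measure.dirac (Y k ω)

/-- `μ_n(A) = E[Σ_{k<n} ω(X_k^(0)) 1_A(X_k^(0)) / Σ_{j<n} ω(X_j^(0))]` of
the importance-resampling scheme. -/
noncomputable def muN (Pr : Measure Ω) (w : X → ℝ) (Y : ℕ → Ω → X) (n : ℕ) : Measure X :=
  Pr.bind (empMeas w Y n)

section Aux

variable {P : X → Measure X} {μ : Measure X} {θ : ℝ}

lemma measurable_iter (hP : Measurable P) (n : ℕ) : Measurable (iter P n) := by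
  induction n with
  | zero => exact Measure.measurable_dirac
  | succ n ih => exact (Measure.measurable_bind' hP).comp ih

lemma isProb_bind {α β : Type*} [MeasurableSpace α] [MeasurableSpace β]
    (m : Measure α) [IsProbabilityMeasure m] {κ : α → Measure β}
    (hκ : Measurable κ) (h : ∀ x, IsProbabilityMeasure (κ x)) :
    IsProbabilityMeasure (m.bind κ) := by
  constructor
  rw [Measure.bind_apply MeasurableSet.univ hκ.aemeasurable]
  have h1 : ∀ x, κ x Set.univ = 1 := fun x => (h x).measure_univ
  simp [h1]

lemma isProb_iter (hP : Measurable P) (hPp : ∀ x, IsProbabilityMeasure (P x)) (n : ℕ) (x : X) :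
    IsProbabilityMeasure (iter P n x) := by
  induction n with
  | zero => show IsProbabilityMeasure (Measure.dirac x); infer_instance
  | succ n ih =>
    haveI := ih
    exact isProb_bind (iter P n x) hP hPp

lemma bind_smul' {κ : X → Measure X} (hκ : Measurable κ) (c : ℝ≥0∞) (m : Measure X) :
    (c • m).bind κ = c • m.bind κ := by
  ext s hs
  rw [Measure.bind_apply hs hκ.aemeasurable, Measure.smul_apply, Measure.bind_apply hs hκ.aemeasurable,
    lintegral_smul_measure, smul_eq_mul]

lemma bind_add' {κ : X → Measure X} (hκ : Measurable κ) (m₁ m₂ : Measure X) :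
    (m₁ + m₂).bind κ = m₁.bind κ + m₂.bind κ := by
  ext s hs
  rw [Measure.bind_apply hs hκ.aemeasurable, Measure.add_apply, Measure.bind_apply hs hκ.aemeasurable,
    Measure.bind_apply hs hκ.aemeasurable, lintegral_add_measure]

lemma bind_finset_sum {ι : Type*} {κ : X → Measure X} (hκ : Measurable κ)
    (s : Finset ι) (m : ι → Measure X) :
    (∑ i ∈ s, m i).bind κ = ∑ i ∈ s, (m i).bind κ := by
  classical
  induction s using Finset.induction_on with
  | empty => simp
  | insert _ _ h ih => rw [Finset.sum_insert h, Finset.sum_insert h, bind_add' hκ, ih]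

lemma measurable_mixK (hP : Measurable P) : Measurable (mixK P μ θ) := by
  apply Measure.measurable_of_measurable_coe
  intro s hs
  have h1 : (fun x => mixK P μ θ x s) =
      fun x => ENNReal.ofReal θ * P x s + ENNReal.ofReal (1 - θ) * μ s := by
    funext x
    simp [mixK, Measure.add_apply, Measure.smul_apply, smul_eq_mul]
  rw [h1]
  exact (((Measure.measurable_coe hs).comp hP).const_mul _).add_const _

lemma bind_mixK (hP : Measurable P) (m : Measure X) :
    m.bind (mixK P μ θ) =
      ENNReal.ofReal θ • m.bind P + (ENNReal.ofReal (1 - θ) * m Set.univ) • μ := by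
  ext s hs
  rw [Measure.bind_apply hs (measurable_mixK hP).aemeasurable]
  have h1 : ∀ x, mixK P μ θ x s = ENNReal.ofReal θ * P x s + ENNReal.ofReal (1 - θ) * μ s := by
    intro x; simp [mixK, Measure.add_apply, Measure.smul_apply, smul_eq_mul]
  simp_rw [h1]
  have hPs : Measurable fun a => P a s := (Measure.measurable_coe hs).comp hP
  rw [lintegral_add_right _ measurable_const,
    lintegral_const_mul _ hPs, lintegral_const,
    Measure.add_apply, Measure.smul_apply, Measure.smul_apply, smul_eq_mul, smul_eq_mul,
    Measure.bind_apply hs hP.aemeasurable]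
  ring

lemma geom_aux (hθ0 : 0 ≤ θ) (hθ1 : θ < 1) (k : ℕ) :
    ENNReal.ofReal θ ^ k * ENNReal.ofReal (1 - θ) +
      ENNReal.ofReal (1 - θ) * ENNReal.ofReal (1 - θ) *
        ∑ i ∈ Finset.range k, ENNReal.ofReal θ ^ i
      = ENNReal.ofReal (1 - θ) := by
  have h1 : (0:ℝ) ≤ 1 - θ := by linarith
  have hθk0 : (0:ℝ) ≤ θ ^ k := pow_nonneg hθ0 k
  have hS0 : (0:ℝ) ≤ ∑ i ∈ Finset.range k, θ ^ i :=
    Finset.sum_nonneg fun i _ => pow_nonneg hθ0 i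
  have hsum : ∑ i ∈ Finset.range k, ENNReal.ofReal θ ^ i
      = ENNReal.ofReal (∑ i ∈ Finset.range k, θ ^ i) := by
    rw [ENNReal.ofReal_sum_of_nonneg (fun i _ => pow_nonneg hθ0 i)]
    exact Finset.sum_congr rfl fun i _ => (ENNReal.ofReal_pow hθ0 i).symm
  have hgeom : (1 - θ) * ∑ i ∈ Finset.range k, θ ^ i = 1 - θ ^ k := by
    have h := geom_sum_mul θ k
    linear_combination -h
  rw [hsum, ← ENNReal.ofReal_pow hθ0, ← ENNReal.ofReal_mul hθk0,
    ← ENNReal.ofReal_mul h1, ← ENNReal.ofReal_mul (mul_nonneg h1 h1),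
    ← ENNReal.ofReal_add (mul_nonneg hθk0 h1) (mul_nonneg (mul_nonneg h1 h1) hS0)]
  exact congrArg ENNReal.ofReal (by linear_combination (1 - θ) * hgeom)

lemma iter_mixK (hP : Measurable P) (hPp : ∀ x, IsProbabilityMeasure (P x))
    [IsProbabilityMeasure μ] (hθ0 : 0 ≤ θ) (hθ1 : θ < 1) (k : ℕ) (x : X) :
    iter (mixK P μ θ) k x =
      ENNReal.ofReal θ ^ k • iter P k x +
        ENNReal.ofReal (1 - θ) •
          ∑ i ∈ Finset.range k, ENNReal.ofReal θ ^ i • μ.bind (iter P i) := by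
  induction k with
  | zero => simp [iter]
  | succ k ih =>
    have hQ : Measurable (mixK P μ θ) := measurable_mixK hP
    have hstep : iter (mixK P μ θ) (k+1) x = (iter (mixK P μ θ) k x).bind (mixK P μ θ) := rfl
    rw [hstep, ih, bind_add' hQ, bind_smul' hQ, bind_smul' hQ, bind_finset_sum hQ]
    have hbindPk : (iter P k x).bind (mixK P μ θ) =
        ENNReal.ofReal θ • iter P (k+1) x + ENNReal.ofReal (1 - θ) • μ := by
      haveI := isProb_iter hP hPp k x
      rw [bind_mixK hP, measure_univ, mul_one]
      rfl
    have hbindμPi : ∀ i, ((ENNReal.ofReal θ ^ i • μ.bind (iter P i)).bind (mixK P μ θ)) =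
        ENNReal.ofReal θ ^ i •
          (ENNReal.ofReal θ • μ.bind (iter P (i+1)) + ENNReal.ofReal (1 - θ) • μ) := by
      intro i
      haveI := isProb_bind μ (measurable_iter hP i) (isProb_iter hP hPp i)
      rw [bind_smul' hQ, bind_mixK hP, measure_univ, mul_one,
        Measure.bind_bind (measurable_iter hP i).aemeasurable hP.aemeasurable]
      rfl
    rw [hbindPk]
    rw [Finset.sum_congr rfl fun i _ => hbindμPi i]
    rw [Finset.sum_range_succ']
    have h0 : μ.bind (iter P 0) = μ := by
      show μ.bind (fun x => Measure.dirac x) = μ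
      exact Measure.bind_dirac
    rw [h0]
    simp only [pow_zero, one_smul, smul_add, smul_smul, Finset.smul_sum, Finset.sum_add_distrib,
      ← pow_succ]
    have hc : ENNReal.ofReal θ ^ k * ENNReal.ofReal (1 - θ) +
        ∑ i ∈ Finset.range k,
          ENNReal.ofReal (1 - θ) * (ENNReal.ofReal θ ^ i * ENNReal.ofReal (1 - θ))
        = ENNReal.ofReal (1 - θ) := by
      have h2 : ∀ i, ENNReal.ofReal (1 - θ) * (ENNReal.ofReal θ ^ i * ENNReal.ofReal (1 - θ))
          = ENNReal.ofReal (1 - θ) * ENNReal.ofReal (1 - θ) * ENNReal.ofReal θ ^ i :=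
        fun i => by ring
      rw [Finset.sum_congr rfl fun i _ => h2 i, ← Finset.mul_sum]
      exact geom_aux hθ0 hθ1 k
    have hμc : (ENNReal.ofReal θ ^ k * ENNReal.ofReal (1 - θ)) • μ +
        (∑ i ∈ Finset.range k,
          ENNReal.ofReal (1 - θ) * (ENNReal.ofReal θ ^ i * ENNReal.ofReal (1 - θ))) • μ
        = ENNReal.ofReal (1 - θ) • μ := by
      rw [← add_smul, hc]
    rw [← Finset.sum_smul, ← hμc]
    abel


lemma integral_bind' {m : Measure X} [IsProbabilityMeasure m] {κ : X → Measure X}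
    (hκ : Measurable κ) (hprob : ∀ x, IsProbabilityMeasure (κ x))
    {g : X → ℝ} (hg : Measurable g) (hint : Integrable g (m.bind κ)) :
    ∫ y, g y ∂(m.bind κ) = ∫ x, ∫ y, g y ∂(κ x) ∂m := by
  set K : ProbabilityTheory.Kernel X X := ⟨κ, hκ⟩ with hK
  haveI : ProbabilityTheory.IsMarkovKernel K := ⟨hprob⟩
  have hbind : m.bind κ = (m.compProd K).map Prod.snd := by
    ext s hs
    rw [Measure.map_apply measurable_snd hs, Measure.bind_apply hs hκ.aemeasurable,
      Measure.compProd_apply (measurable_snd hs)]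
    rfl
  rw [hbind] at hint ⊢
  rw [integral_map measurable_snd.aemeasurable hg.aestronglyMeasurable]
  have hint2 : Integrable (fun p : X × X => g p.2) (m.compProd K) :=
    (integrable_map_measure hg.aestronglyMeasurable measurable_snd.aemeasurable).mp hint
  rw [Measure.integral_compProd hint2]
  rfl

lemma stronglyMeasurable_integral_iter (hP : Measurable P)
    (hPp : ∀ x, IsProbabilityMeasure (P x)) (i : ℕ) {g : X → ℝ} (hg : Measurable g) :
    StronglyMeasurable fun z => ∫ y, g y ∂(iter P i z) := by
  set K : ProbabilityTheory.Kernel X X := ⟨iter P i, measurable_iter hP i⟩ with hK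
  haveI : ProbabilityTheory.IsMarkovKernel K := ⟨isProb_iter hP hPp i⟩
  have h : StronglyMeasurable (Function.uncurry fun (_ : X) (y : X) => g y) :=
    hg.stronglyMeasurable.comp_measurable measurable_snd
  exact h.integral_kernel_prod_right (κ := K)

end Aux

section Emp

variable {Pr : Measure Ω} {w : X → ℝ} {Y : ℕ → Ω → X}

lemma measurable_empMeas (hw : Measurable w) (hY : ∀ k, Measurable (Y k)) (n : ℕ) :
    Measurable (empMeas w Y n) := by
  apply Measure.measurable_of_measurable_coe
  intro s hs
  have h1 : (fun ω => empMeas w Y n ω s) = fun ω =>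
      ∑ k ∈ Finset.range n,
        ENNReal.ofReal (w (Y k ω) / ∑ j ∈ Finset.range n, w (Y j ω)) *
          s.indicator (1 : X → ℝ≥0∞) (Y k ω) := by
    funext ω
    rw [empMeas, Measure.finset_sum_apply]
    exact Finset.sum_congr rfl fun k _ => by
      rw [Measure.smul_apply, smul_eq_mul, Measure.dirac_apply' _ hs]
  rw [h1]
  apply Finset.measurable_sum
  intro k _
  apply Measurable.mul
  · exact ENNReal.measurable_ofReal.comp
      ((hw.comp (hY k)).div (Finset.measurable_sum _ fun j _ => hw.comp (hY j)))
  · exact (measurable_one.indicator hs).comp (hY k)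

lemma isProb_empMeas (hwpos : ∀ x, 0 < w x) {n : ℕ} (hn : 1 ≤ n) (ω : Ω) :
    IsProbabilityMeasure (empMeas w Y n ω) := by
  constructor
  have hW : 0 < ∑ j ∈ Finset.range n, w (Y j ω) :=
    Finset.sum_pos (fun j _ => hwpos _) (Finset.nonempty_range_iff.mpr (by omega))
  rw [empMeas, Measure.finset_sum_apply]
  have h1 : ∀ k ∈ Finset.range n,
      (ENNReal.ofReal (w (Y k ω) / ∑ j ∈ Finset.range n, w (Y j ω)) •
        Measure.dirac (Y k ω)) Set.univ
      = ENNReal.ofReal (w (Y k ω) / ∑ j ∈ Finset.range n, w (Y j ω)) := by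
    intro k _
    rw [Measure.smul_apply, smul_eq_mul, measure_univ, mul_one]
  rw [Finset.sum_congr rfl h1,
    ← ENNReal.ofReal_sum_of_nonneg (fun k _ => div_nonneg (hwpos _).le hW.le),
    ← Finset.sum_div, div_self hW.ne']
  exact ENNReal.ofReal_one

lemma isProb_muN (hPr : IsProbabilityMeasure Pr) (hw : Measurable w)
    (hwpos : ∀ x, 0 < w x) (hY : ∀ k, Measurable (Y k)) {n : ℕ} (hn : 1 ≤ n) :
    IsProbabilityMeasure (muN Pr w Y n) := by
  haveI := hPr
  exact isProb_bind Pr (measurable_empMeas hw hY n) (isProb_empMeas hwpos hn)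

end Emp

set_option maxHeartbeats 1000000 in
theorem main_bound
    (P : X → Measure X) (hPmeas : Measurable P)
    (hPprob : ∀ x, IsProbabilityMeasure (P x))
    (π : Measure X) (hπ : IsProbabilityMeasure π)
    (V : X → ℝ) (hVmeas : Measurable V) (hV1 : ∀ x, 1 ≤ V x)
    (α : ℝ) (hα0 : 0 ≤ α)
    (ρ C0 : ℝ) (hρ0 : 0 < ρ) (hρ1 : ρ < 1) (hC0 : 0 ≤ C0)
    (hA : ∀ f : X → ℝ, Measurable f → (∀ x, |f x| ≤ V x ^ α) →
      ∀ (n : ℕ) (x : X),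
        |∫ y, f y ∂(iter P n x) - ∫ y, f y ∂π| ≤ C0 * ρ ^ n * V x ^ α)
    (θ : ℝ) (hθ0 : 0 ≤ θ) (hθ1 : θ < 1)
    (μ : Measure X) (hμprob : IsProbabilityMeasure μ)
    (M : ℝ) (hM : 0 ≤ M)
    (hμV : ∫⁻ x, ENNReal.ofReal (V x ^ α) ∂μ ≤ ENNReal.ofReal M)
    (k : ℕ) (g : X → ℝ) (hgmeas : Measurable g) (hgle : ∀ x, |g x| ≤ V x ^ α) (x : X) :
    |∫ y, g y ∂(iter (mixK P μ θ) k x) - ∫ y, g y ∂(piQ P μ θ)| ≤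
      C0 * (1 + (1 - θ) * M / (1 - θ * ρ)) * θ ^ k * ρ ^ k * V x ^ α := by
  haveI := hπ
  haveI := hμprob
  set Vα : X → ℝ := fun y => V y ^ α with hVαdef
  have hVαmeas : Measurable Vα := hVmeas.pow measurable_const
  have hVα1 : ∀ y, 1 ≤ Vα y := fun y => Real.one_le_rpow (hV1 y) hα0
  have hVα0 : ∀ y, 0 ≤ Vα y := fun y => le_trans zero_le_one (hVα1 y)
  have hne : Nonempty X := by
    by_contra h
    rw [not_nonempty_iff] at h
    have h1 : π Set.univ = 1 := measure_univ
    rw [Set.univ_eq_empty_iff.mpr h, measure_empty] at h1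
    exact zero_ne_one h1
  obtain ⟨x0⟩ := hne
  set K₀ : ℝ := (1 + C0) * Vα x0 with hK₀def
  have hK₀0 : 0 ≤ K₀ := mul_nonneg (by linarith) (hVα0 x0)
  -- truncated test-function bound
  have htrunc : ∀ (n : ℕ) (z : X) (m : ℕ),
      ∫ y, min (Vα y) (m : ℝ) ∂(iter P n z) ≤ K₀ + C0 * ρ ^ n * Vα z := by
    intro n z m
    set f : X → ℝ := fun y => min (Vα y) (m : ℝ) with hfdef
    have hf : Measurable f := hVαmeas.min measurable_const
    have hf0 : ∀ y, 0 ≤ f y := fun y => le_min (hVα0 y) (Nat.cast_nonneg m)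
    have hfle : ∀ y, |f y| ≤ V y ^ α := fun y => by
      rw [abs_of_nonneg (hf0 y)]; exact min_le_left _ _
    have h1 := hA f hf hfle n z
    have h2 := hA f hf hfle 0 x0
    have e0 : ∫ y, f y ∂(iter P 0 x0) = f x0 := by
      show ∫ y, f y ∂(Measure.dirac x0) = f x0
      exact integral_dirac' _ _ hf.stronglyMeasurable
    rw [e0, pow_zero, mul_one] at h2
    have h2' := abs_le.mp h2
    have h1' := abs_le.mp h1
    have hfx0 : f x0 ≤ Vα x0 := min_le_left _ _
    have hπf : ∫ y, f y ∂π ≤ K₀ := by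
      rw [hK₀def]; nlinarith [h2'.1]
    nlinarith [h1'.1]
  -- lintegral bound along iterates
  have hlint_iter : ∀ (n : ℕ) (z : X),
      ∫⁻ y, ENNReal.ofReal (Vα y) ∂(iter P n z) ≤ ENNReal.ofReal (K₀ + C0 * ρ ^ n * Vα z) := by
    intro n z
    haveI := isProb_iter hPmeas hPprob n z
    have hmeas : ∀ m : ℕ, Measurable fun y => ENNReal.ofReal (min (Vα y) (m:ℝ)) :=
      fun m => ENNReal.measurable_ofReal.comp (hVαmeas.min measurable_const)
    have hmono : Monotone fun (m : ℕ) (y : X) => ENNReal.ofReal (min (Vα y) (m:ℝ)) := by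
      intro m m' hmm y
      exact ENNReal.ofReal_le_ofReal (min_le_min le_rfl (Nat.cast_le.mpr hmm))
    have hsup : ∀ y, (⨆ m : ℕ, ENNReal.ofReal (min (Vα y) (m:ℝ))) = ENNReal.ofReal (Vα y) := by
      intro y
      apply le_antisymm
      · exact iSup_le fun m => ENNReal.ofReal_le_ofReal (min_le_left _ _)
      · exact le_iSup_of_le ⌈Vα y⌉₊ (le_of_eq (by rw [min_eq_left (Nat.le_ceil _)]))
    have e1 : ∫⁻ y, ENNReal.ofReal (Vα y) ∂(iter P n z)
        = ⨆ m : ℕ, ∫⁻ y, ENNReal.ofReal (min (Vα y) (m:ℝ)) ∂(iter P n z) := by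
      rw [← lintegral_iSup hmeas hmono]
      exact lintegral_congr fun y => (hsup y).symm
    rw [e1]
    apply iSup_le
    intro m
    have hint : Integrable (fun y => min (Vα y) (m:ℝ)) (iter P n z) := by
      refine Integrable.mono' (integrable_const (m:ℝ))
        ((hVαmeas.min measurable_const).aestronglyMeasurable) (ae_of_all _ fun y => ?_)
      rw [Real.norm_eq_abs, abs_of_nonneg (le_min (hVα0 y) (Nat.cast_nonneg m))]
      exact min_le_right _ _
    rw [← MeasureTheory.ofReal_integral_eq_lintegral_ofReal hint
      (ae_of_all _ fun y => le_min (hVα0 y) (Nat.cast_nonneg m))]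
    exact ENNReal.ofReal_le_ofReal (htrunc n z m)
  set KB : ℝ := K₀ + C0 * M with hKBdef
  have hρpow : ∀ i : ℕ, ρ ^ i ≤ 1 := fun i => pow_le_one₀ hρ0.le hρ1.le
  have hlint_muP : ∀ i : ℕ,
      ∫⁻ y, ENNReal.ofReal (Vα y) ∂(μ.bind (iter P i)) ≤ ENNReal.ofReal KB := by
    intro i
    have hVm : Measurable fun y => ENNReal.ofReal (Vα y) := ENNReal.measurable_ofReal.comp hVαmeas
    rw [Measure.lintegral_bind (measurable_iter hPmeas i).aemeasurable hVm.aemeasurable]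
    calc ∫⁻ z, ∫⁻ y, ENNReal.ofReal (Vα y) ∂(iter P i z) ∂μ
        ≤ ∫⁻ z, (ENNReal.ofReal K₀ + ENNReal.ofReal (C0 * ρ ^ i) * ENNReal.ofReal (Vα z)) ∂μ := by
          apply lintegral_mono
          intro z
          refine le_trans (hlint_iter i z) (le_of_eq ?_)
          rw [ENNReal.ofReal_add hK₀0
              (mul_nonneg (mul_nonneg hC0 (pow_nonneg hρ0.le i)) (hVα0 z)),
            ENNReal.ofReal_mul (p := C0 * ρ ^ i) (mul_nonneg hC0 (pow_nonneg hρ0.le i))]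
      _ = ENNReal.ofReal K₀ * μ Set.univ
          + ENNReal.ofReal (C0 * ρ ^ i) * ∫⁻ z, ENNReal.ofReal (Vα z) ∂μ := by
          rw [lintegral_add_left measurable_const, lintegral_const,
            lintegral_const_mul _ hVm]
      _ ≤ ENNReal.ofReal K₀ + ENNReal.ofReal C0 * ENNReal.ofReal M := by
          rw [measure_univ, mul_one]
          have hcc : C0 * ρ ^ i ≤ C0 := by
            nlinarith [mul_nonneg hC0 (sub_nonneg.mpr (hρpow i))]
          exact add_le_add le_rfl (mul_le_mul' (ENNReal.ofReal_le_ofReal hcc) hμV)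
      _ = ENNReal.ofReal KB := by
          rw [← ENNReal.ofReal_mul hC0, ← ENNReal.ofReal_add hK₀0 (mul_nonneg hC0 hM)]
  have hnorm : ∀ y, (‖g y‖₊ : ℝ≥0∞) ≤ ENNReal.ofReal (Vα y) := fun y => by
    rw [← enorm_eq_nnnorm, ← ofReal_norm, Real.norm_eq_abs]
    exact ENNReal.ofReal_le_ofReal (hgle y)
  have hfin_iter : ∀ (n : ℕ) (z : X), (∫⁻ y, ENNReal.ofReal (Vα y) ∂(iter P n z)) < ⊤ :=
    fun n z => lt_of_le_of_lt (hlint_iter n z) ENNReal.ofReal_lt_top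
  have hfin_muP : ∀ i, (∫⁻ y, ENNReal.ofReal (Vα y) ∂(μ.bind (iter P i))) < ⊤ :=
    fun i => lt_of_le_of_lt (hlint_muP i) ENNReal.ofReal_lt_top
  have hIg : ∀ (ν : Measure X), (∫⁻ y, ENNReal.ofReal (Vα y) ∂ν) < ⊤ → Integrable g ν := by
    intro ν hν
    refine ⟨hgmeas.aestronglyMeasurable, ?_⟩
    show ∫⁻ y, (‖g y‖₊ : ℝ≥0∞) ∂ν < ⊤
    exact lt_of_le_of_lt (lintegral_mono fun y => hnorm y) hν
  have hint_muP : ∀ i, Integrable g (μ.bind (iter P i)) := fun i => hIg _ (hfin_muP i)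
  have hintVα : Integrable Vα μ := by
    refine ⟨hVαmeas.aestronglyMeasurable, ?_⟩
    show ∫⁻ y, (‖Vα y‖₊ : ℝ≥0∞) ∂μ < ⊤
    have hh : ∀ y, (‖Vα y‖₊ : ℝ≥0∞) = ENNReal.ofReal (Vα y) := fun y => by
      rw [← enorm_eq_nnnorm, ← ofReal_norm, Real.norm_eq_abs, abs_of_nonneg (hVα0 y)]
    calc ∫⁻ y, (‖Vα y‖₊ : ℝ≥0∞) ∂μ = ∫⁻ y, ENNReal.ofReal (Vα y) ∂μ :=
          lintegral_congr fun y => hh y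
      _ < ⊤ := lt_of_le_of_lt hμV ENNReal.ofReal_lt_top
  have hVαM : ∫ z, Vα z ∂μ ≤ M := by
    rw [integral_eq_lintegral_of_nonneg_ae (ae_of_all _ hVα0) hVαmeas.aestronglyMeasurable]
    exact ENNReal.toReal_le_of_le_ofReal hM hμV
  set b : ℝ := ∫ y, g y ∂π with hbdef
  set p : ℕ → X → ℝ := fun n z => ∫ y, g y ∂(iter P n z) with hpdef
  set a : ℕ → ℝ := fun i => ∫ y, g y ∂(μ.bind (iter P i)) with hadef
  have hF2 : ∀ (n : ℕ) (z : X), |p n z - b| ≤ C0 * ρ ^ n * Vα z := fun n z => hA g hgmeas hgle n z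
  have hF3 : ∀ i, |a i - b| ≤ C0 * ρ ^ i * M := by
    intro i
    have heq : a i = ∫ z, p i z ∂μ :=
      integral_bind' (measurable_iter hPmeas i) (isProb_iter hPmeas hPprob i) hgmeas (hint_muP i)
    have hpm := stronglyMeasurable_integral_iter hPmeas hPprob i hgmeas
    have hintp : Integrable (fun z => p i z) μ := by
      have hbnd : Integrable (fun z => |b| + C0 * Vα z) μ :=
        (integrable_const |b|).add (hintVα.const_mul C0)
      refine Integrable.mono' hbnd hpm.aestronglyMeasurable (ae_of_all _ fun z => ?_)
      have h2 := abs_le.mp (hF2 i z)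
      rw [Real.norm_eq_abs]
      have h3 : C0 * ρ ^ i * Vα z ≤ C0 * Vα z := by
        nlinarith [mul_nonneg (mul_nonneg hC0 (hVα0 z)) (sub_nonneg.mpr (hρpow i))]
      rw [abs_le]
      constructor <;> [linarith [h2.1, le_abs_self b, neg_abs_le b];
        linarith [h2.2, le_abs_self b, neg_abs_le b]]
    have hsub : a i - b = ∫ z, (p i z - b) ∂μ := by
      rw [integral_sub hintp (integrable_const b), integral_const, probReal_univ,
        one_smul, heq]
    rw [hsub]
    calc |∫ z, (p i z - b) ∂μ| ≤ ∫ z, |p i z - b| ∂μ := by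
          simpa [Real.norm_eq_abs] using
            norm_integral_le_integral_norm (μ := μ) (fun z => p i z - b)
      _ ≤ ∫ z, C0 * ρ ^ i * Vα z ∂μ := by
          apply integral_mono ((hintp.sub (integrable_const b)).abs) (hintVα.const_mul _)
          intro z; exact hF2 i z
      _ = C0 * ρ ^ i * ∫ z, Vα z ∂μ := integral_const_mul _ _
      _ ≤ C0 * ρ ^ i * M := by
          have hcc : 0 ≤ C0 * ρ ^ i := mul_nonneg hC0 (pow_nonneg hρ0.le i)
          exact mul_le_mul_of_nonneg_left hVαM hcc
  -- decomposition of Q^k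
  have hdecomp := iter_mixK hPmeas hPprob (μ := μ) hθ0 hθ1 k x
  have hint_smul : ∀ (c : ℝ≥0∞), c ≠ ⊤ → ∀ (ν : Measure X),
      (∫⁻ y, ENNReal.ofReal (Vα y) ∂ν) < ⊤ → Integrable g (c • ν) := by
    intro c hc ν hν
    refine ⟨hgmeas.aestronglyMeasurable, ?_⟩
    show ∫⁻ y, (‖g y‖₊ : ℝ≥0∞) ∂(c • ν) < ⊤
    rw [lintegral_smul_measure]
    exact ENNReal.mul_lt_top hc.lt_top (lt_of_le_of_lt (lintegral_mono fun y => hnorm y) hν)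
  have hθ'ne : ∀ i : ℕ, (ENNReal.ofReal θ ^ i) ≠ ⊤ :=
    fun i => ENNReal.pow_ne_top ENNReal.ofReal_ne_top
  have hintA : Integrable g (ENNReal.ofReal θ ^ k • iter P k x) :=
    hint_smul _ (hθ'ne k) _ (hfin_iter k x)
  have hintMi : ∀ i, Integrable g (ENNReal.ofReal θ ^ i • μ.bind (iter P i)) :=
    fun i => hint_smul _ (hθ'ne i) _ (hfin_muP i)
  have hintS : Integrable g (ENNReal.ofReal (1 - θ) •
      ∑ i ∈ Finset.range k, ENNReal.ofReal θ ^ i • μ.bind (iter P i)) := by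
    refine ⟨hgmeas.aestronglyMeasurable, ?_⟩
    show ∫⁻ y, (‖g y‖₊ : ℝ≥0∞) ∂_ < ⊤
    rw [lintegral_smul_measure]
    apply ENNReal.mul_lt_top ENNReal.ofReal_lt_top
    rw [lintegral_finset_sum_measure]
    refine ENNReal.sum_lt_top.mpr fun i _ => ?_
    rw [lintegral_smul_measure]
    exact ENNReal.mul_lt_top (hθ'ne i).lt_top
      (lt_of_le_of_lt (lintegral_mono fun y => hnorm y) (hfin_muP i))
  have hθk : (ENNReal.ofReal θ ^ k).toReal = θ ^ k := by
    rw [← ENNReal.ofReal_pow hθ0, ENNReal.toReal_ofReal (pow_nonneg hθ0 k)]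
  have hterm : ∀ i, ∫ y, g y ∂(ENNReal.ofReal θ ^ i • μ.bind (iter P i)) = θ ^ i * a i := by
    intro i
    rw [integral_smul_measure, ← ENNReal.ofReal_pow hθ0,
      ENNReal.toReal_ofReal (pow_nonneg hθ0 i), smul_eq_mul]
  have hLHS : ∫ y, g y ∂(iter (mixK P μ θ) k x)
      = θ ^ k * p k x + (1 - θ) * ∑ i ∈ Finset.range k, θ ^ i * a i := by
    rw [hdecomp, integral_add_measure hintA hintS, integral_smul_measure, hθk,
      integral_smul_measure, ENNReal.toReal_ofReal (by linarith : (0:ℝ) ≤ 1 - θ),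
      integral_finset_sum_measure (fun i _ => hintMi i)]
    simp only [smul_eq_mul]
    rw [Finset.sum_congr rfl fun i _ => hterm i]
  set m : ℕ → Measure X := fun i => ENNReal.ofReal θ ^ i • μ.bind (iter P i) with hmdef
  have hintsum : Integrable g (Measure.sum m) := by
    refine ⟨hgmeas.aestronglyMeasurable, ?_⟩
    show ∫⁻ y, (‖g y‖₊ : ℝ≥0∞) ∂(Measure.sum m) < ⊤
    rw [lintegral_sum_measure]
    calc ∑' i, ∫⁻ y, (‖g y‖₊ : ℝ≥0∞) ∂(m i)
        ≤ ∑' i, ENNReal.ofReal θ ^ i * ENNReal.ofReal KB := by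
          apply ENNReal.tsum_le_tsum
          intro i
          rw [hmdef]
          rw [lintegral_smul_measure]
          exact mul_le_mul' le_rfl (le_trans (lintegral_mono fun y => hnorm y) (hlint_muP i))
      _ = ENNReal.ofReal KB * ∑' i : ℕ, ENNReal.ofReal θ ^ i := by
          rw [ENNReal.tsum_mul_right, mul_comm]
      _ < ⊤ := by
          apply ENNReal.mul_lt_top ENNReal.ofReal_lt_top
          rw [ENNReal.tsum_geometric]
          exact ENNReal.inv_lt_top.mpr (tsub_pos_iff_lt.mpr (ENNReal.ofReal_lt_one.mpr hθ1))
  have hRHS : ∫ y, g y ∂(piQ P μ θ) = (1 - θ) * ∑' i : ℕ, θ ^ i * a i := by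
    rw [show piQ P μ θ = ENNReal.ofReal (1 - θ) • Measure.sum m from rfl]
    rw [integral_smul_measure, ENNReal.toReal_ofReal (by linarith : (0:ℝ) ≤ 1 - θ),
      integral_sum_measure hintsum]
    simp only [smul_eq_mul]
    congr 1
    exact tsum_congr fun i => hterm i
  have habound : ∀ i, |a i| ≤ |b| + C0 * M := by
    intro i
    have h := abs_le.mp (hF3 i)
    have hmm : C0 * ρ ^ i * M ≤ C0 * M := by
      nlinarith [mul_nonneg (mul_nonneg hC0 hM) (sub_nonneg.mpr (hρpow i))]
    rw [abs_le]
    constructor <;> [linarith [h.1, neg_abs_le b]; linarith [h.2, le_abs_self b]]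
  have hSumm : Summable (fun i : ℕ => θ ^ i * a i) := by
    apply Summable.of_norm_bounded (g := fun i => (|b| + C0 * M) * θ ^ i)
      ((summable_geometric_of_lt_one hθ0 hθ1).mul_left _)
    intro i
    rw [Real.norm_eq_abs, abs_mul, abs_pow, abs_of_nonneg hθ0]
    calc θ ^ i * |a i| ≤ θ ^ i * (|b| + C0 * M) :=
          mul_le_mul_of_nonneg_left (habound i) (pow_nonneg hθ0 i)
      _ = (|b| + C0 * M) * θ ^ i := mul_comm _ _
  have hsplit : ∑ i ∈ Finset.range k, θ ^ i * a i + ∑' i : ℕ, θ ^ (i + k) * a (i + k)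
      = ∑' i : ℕ, θ ^ i * a i := hSumm.sum_add_tsum_nat_add k
  set r : ℝ := θ * ρ with hrdef
  have hr0 : 0 ≤ r := mul_nonneg hθ0 hρ0.le
  have hr1 : r < 1 := by nlinarith
  have h1r : 0 < 1 - r := by linarith
  have hTsummand_bound : ∀ i : ℕ, |θ ^ (i + k) * (a (i + k) - b)| ≤ (C0 * M * r ^ k) * r ^ i := by
    intro i
    rw [abs_mul, abs_pow, abs_of_nonneg hθ0]
    calc θ ^ (i + k) * |a (i + k) - b| ≤ θ ^ (i + k) * (C0 * ρ ^ (i + k) * M) :=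
          mul_le_mul_of_nonneg_left (hF3 (i + k)) (pow_nonneg hθ0 _)
      _ = (C0 * M * r ^ k) * r ^ i := by rw [hrdef]; ring
  have hgeomr : Summable (fun i : ℕ => (C0 * M * r ^ k) * r ^ i) :=
    (summable_geometric_of_lt_one hr0 hr1).mul_left _
  have hTsumm : Summable (fun i : ℕ => θ ^ (i + k) * (a (i + k) - b)) :=
    Summable.of_norm_bounded hgeomr (fun i => by
      rw [Real.norm_eq_abs]; exact hTsummand_bound i)
  have hTabsSumm : Summable (fun i : ℕ => |θ ^ (i + k) * (a (i + k) - b)|) :=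
    Summable.of_nonneg_of_le (fun i => abs_nonneg _) hTsummand_bound hgeomr
  set T : ℝ := ∑' i : ℕ, θ ^ (i + k) * (a (i + k) - b) with hTdef
  have hTbound : |T| ≤ C0 * M * r ^ k * (1 - r)⁻¹ := by
    have h0s : Summable fun i : ℕ => ‖θ ^ (i + k) * (a (i + k) - b)‖ := by
      simpa only [Real.norm_eq_abs] using hTabsSumm
    have h1s := norm_tsum_le_tsum_norm h0s
    simp only [Real.norm_eq_abs] at h1s
    calc |T| ≤ ∑' i : ℕ, |θ ^ (i + k) * (a (i + k) - b)| := h1s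
      _ ≤ ∑' i : ℕ, (C0 * M * r ^ k) * r ^ i :=
          Summable.tsum_le_tsum hTsummand_bound hTabsSumm hgeomr
      _ = (C0 * M * r ^ k) * (1 - r)⁻¹ := by
          rw [tsum_mul_left, tsum_geometric_of_lt_one hr0 hr1]
  have hsummθb : Summable (fun i : ℕ => θ ^ (i + k) * b) := by
    have hb2 : ∀ i : ℕ, (θ ^ k * b) * θ ^ i = θ ^ (i + k) * b := fun i => by ring
    exact Summable.congr ((summable_geometric_of_lt_one hθ0 hθ1).mul_left (θ ^ k * b)) hb2
  have htail : ∑' i : ℕ, θ ^ (i + k) * a (i + k) = T + θ ^ k * (1 - θ)⁻¹ * b := by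
    have hsplit2 : ∀ i : ℕ, θ ^ (i + k) * a (i + k)
        = θ ^ (i + k) * (a (i + k) - b) + θ ^ (i + k) * b := fun i => by ring
    rw [tsum_congr hsplit2, hTsumm.tsum_add hsummθb, hTdef]
    congr 1
    have hb3 : ∀ i : ℕ, θ ^ (i + k) * b = (θ ^ k * b) * θ ^ i := fun i => by ring
    rw [tsum_congr hb3, tsum_mul_left, tsum_geometric_of_lt_one hθ0 hθ1]
    ring
  have h1θ : (0:ℝ) < 1 - θ := by linarith
  have hcancel : (1 - θ) * (1 - θ)⁻¹ = 1 := mul_inv_cancel₀ (ne_of_gt h1θ)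
  have hdiff : ∫ y, g y ∂(iter (mixK P μ θ) k x) - ∫ y, g y ∂(piQ P μ θ)
      = θ ^ k * (p k x - b) - (1 - θ) * T := by
    rw [hLHS, hRHS, ← hsplit, htail]
    linear_combination (-(θ ^ k * b)) * hcancel
  rw [hdiff]
  have habs1 : |θ ^ k * (p k x - b)| ≤ θ ^ k * (C0 * ρ ^ k * Vα x) := by
    rw [abs_mul, abs_pow, abs_of_nonneg hθ0]
    exact mul_le_mul_of_nonneg_left (hF2 k x) (pow_nonneg hθ0 k)
  have habs2 : |(1 - θ) * T| ≤ (1 - θ) * (C0 * M * r ^ k * (1 - r)⁻¹) := by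
    rw [abs_mul, abs_of_nonneg (le_of_lt h1θ)]
    exact mul_le_mul_of_nonneg_left hTbound (le_of_lt h1θ)
  have hq : 0 ≤ (1 - θ) * (C0 * M * r ^ k * (1 - r)⁻¹) :=
    mul_nonneg (by linarith)
      (mul_nonneg (mul_nonneg (mul_nonneg hC0 hM) (pow_nonneg hr0 k)) (inv_nonneg.mpr h1r.le))
  calc |θ ^ k * (p k x - b) - (1 - θ) * T|
      ≤ |θ ^ k * (p k x - b)| + |(1 - θ) * T| := abs_sub _ _
    _ ≤ θ ^ k * (C0 * ρ ^ k * Vα x) + (1 - θ) * (C0 * M * r ^ k * (1 - r)⁻¹) := by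
        exact add_le_add habs1 habs2
    _ ≤ θ ^ k * (C0 * ρ ^ k * Vα x)
        + (1 - θ) * (C0 * M * r ^ k * (1 - r)⁻¹) * Vα x := by
        nlinarith [hVα1 x, hq]
    _ = C0 * (1 + (1 - θ) * M / (1 - θ * ρ)) * θ ^ k * ρ ^ k * Vα x := by
        rw [hrdef] at h1r ⊢
        field_simp
        ring
  

/-- Let `P` have invariant probability `π` with
`⦀P^n − π⦀_{V^α} ≤ C0 ρ^n`, `θ ∈ [0,1)`, and let `μ` be a probability measure with
`μ(V^α) ≤ M < ∞`.  Set `Q = θP + (1−θ)μ` and `π_Q = (1−θ) Σ_{i≥0} θ^i μP^i`.  Then for all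
`k ≥ 0`, `⦀Q^k − π_Q⦀_{V^α} ≤ C θ^k ρ^k` with `C = C0 (1 + (1−θ)M/(1−θρ))`, which depends
only on `C0, θ, ρ, M`.  In particular, with `μ = μ_n` from the importance-resampling scheme
(so that `sup_n μ_n(V^α) < ∞`), the kernels `P_n = θP + (1−θ)μ_n` satisfy
`⦀P_n^k − π_n⦀_{V^α} ≤ C θ^k ρ^k` with `C` independent of `n` and `k`. -/
theorem mixture_kernel_geometric_ergodicity
    (P : X → Measure X) (hPmeas : Measurable P)
    (hPprob : ∀ x, IsProbabilityMeasure (P x))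
    (π : Measure X) (hπ : IsProbabilityMeasure π) (hinv : π.bind P = π)
    (V : X → ℝ) (hVmeas : Measurable V) (hV1 : ∀ x, 1 ≤ V x)
    (α : ℝ) (hα0 : 0 ≤ α) (hα1 : α ≤ 1)
    (ρ C0 : ℝ) (hρ0 : 0 < ρ) (hρ1 : ρ < 1) (hC0 : 0 ≤ C0)
    -- `⦀P^n − π⦀_{V^α} ≤ C0 ρ^n` for all `n ≥ 0`
    (hA : ∀ f : X → ℝ, Measurable f → (∀ x, |f x| ≤ V x ^ α) →
      ∀ (n : ℕ) (x : X),
        |∫ y, f y ∂(iter P n x) - ∫ y, f y ∂π| ≤ C0 * ρ ^ n * V x ^ α)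
    (θ : ℝ) (hθ0 : 0 ≤ θ) (hθ1 : θ < 1)
    -- the importance-resampling ingredients used in the second part
    (Pr : Measure Ω) (hPr : IsProbabilityMeasure Pr)
    (w : X → ℝ) (hwmeas : Measurable w) (hwpos : ∀ x, 0 < w x)
    (Y : ℕ → Ω → X) (hYmeas : ∀ n, Measurable (Y n)) :
    -- main part: the bound with the explicit constant `C = C0 (1 + (1−θ)M/(1−θρ))`
    (∀ μ : Measure X, IsProbabilityMeasure μ →
      ∀ M : ℝ, 0 ≤ M →
        (∫⁻ x, ENNReal.ofReal (V x ^ α) ∂μ ≤ ENNReal.ofReal M) →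
        ∀ (k : ℕ) (g : X → ℝ), Measurable g → (∀ x, |g x| ≤ V x ^ α) →
          ∀ x, |∫ y, g y ∂(iter (mixK P μ θ) k x) - ∫ y, g y ∂(piQ P μ θ)| ≤
            C0 * (1 + (1 - θ) * M / (1 - θ * ρ)) * θ ^ k * ρ ^ k * V x ^ α) ∧
    -- "in particular": with `μ = μ_n`, `P_n = θP + (1−θ)μ_n` and invariant law `π_n`,
    -- the same bound holds with a constant independent of `n` and `k`
    (∀ M : ℝ, 0 ≤ M →
      (∀ n : ℕ, 1 ≤ n →
        ∫⁻ x, ENNReal.ofReal (V x ^ α) ∂(muN Pr w Y n) ≤ ENNReal.ofReal M) →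
      ∀ n : ℕ, 1 ≤ n →
        ∀ (k : ℕ) (g : X → ℝ), Measurable g → (∀ x, |g x| ≤ V x ^ α) →
          ∀ x, |∫ y, g y ∂(iter (mixK P (muN Pr w Y n) θ) k x) -
              ∫ y, g y ∂(piQ P (muN Pr w Y n) θ)| ≤
            C0 * (1 + (1 - θ) * M / (1 - θ * ρ)) * θ ^ k * ρ ^ k * V x ^ α) := by
  constructor
  · intro μ hμ M hM hμV k g hg hgle x
    exact main_bound P hPmeas hPprob π hπ V hVmeas hV1 α hα0 ρ C0 hρ0 hρ1 hC0 hA θ hθ0 hθ1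
      μ hμ M hM hμV k g hg hgle x
  · intro M hM hall n hn k g hg hgle x
    exact main_bound P hPmeas hPprob π hπ V hVmeas hV1 α hα0 ρ C0 hρ0 hρ1 hC0 hA θ hθ0 hθ1
      (muN Pr w Y n) (isProb_muN hPr hwmeas hwpos hYmeas hn) M hM (hall n hn) k g hg hgle x

end MixtureKernelErgodicity
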